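/- Let c ∈ (0, c_crit), let s₀ ∈ (0, 1), and suppose h : [0, s₀] → [-1, 1] solves the transformed Jang equation dh/ds = F_c(s, h(s)) with h(0) = 0, |h(s)| < 1 for s ∈ [0, s₀), and h(s₀) = -1. Set u₀ := c(s₀ - 1)/2, and let f : [-c/2, u₀) → ℝ be the corresponding solution of Jang's equation on L_c with f(-c/2) = f'(-c/2) = 0, so that f'(u) = h(γ(u))/√(1 - h(γ(u))²) with γ(u) = (2/c)u + 1. Then there exist positive constants K and ε such that f'(u) ≥ -K/√(u₀ - u) for all u ∈ [u₀ - ε, u₀). -/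

import Mathlib

/-- The function `φ(r) = e^{r/(2m)-1}(r - 2m)` defining the Kruskal radius implicitly. -/
noncomputable def phi (m r : ℝ) : ℝ := Real.exp (r / (2*m) - 1) * (r - 2*m)

/-- The derivative `φ_r(r) = (r/(2m)) e^{r/(2m)-1}`. -/
noncomputable def phiR (m r : ℝ) : ℝ := (r / (2*m)) * Real.exp (r / (2*m) - 1)

/-- The critical parameter `c_crit = √(8m/e)`. -/
noncomputable def cCrit (m : ℝ) : ℝ := Real.sqrt (8*m / Real.exp 1)

/-- The right-hand side of Jang's equation on the slice `L_c`:
`f''(u) = jangRHS m c u r (f'(u))` where `r = r(u)` solves `φ(r) = u(u+c)`. -/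
noncomputable def jangRHS (m c u r p : ℝ) : ℝ :=
  c * Real.sqrt (2*m / phiR m r + p^2/4) *
      ((1 / phiR m r) * (1/(2*m) - 3/r) - p^2/(2*m*r))
    - ((2*u + c)/(4*m*r)) * p^3
    - ((2*u + c)/(2 * phiR m r)) * (1/(2*m) + 5/r) * p

/-- The right-hand side `F_c(s,h)` of the transformed Jang equation,
with `r = r_c(s)` solving `φ(r) = (c²/4)(s²-1)`. -/
noncomputable def Fc (m c s r h : ℝ) : ℝ :=
  (c^2/2) * Real.sqrt (2*m*(1 - h^2) / phiR m r + h^2/4) *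
      (((1 - h^2) / phiR m r) * (1/(2*m) - 3/r) - h^2/(2*m*r))
    - (c^2*s/(8*m*r)) * h^3
    - (c^2*s/(4 * phiR m r)) * (1/(2*m) + 5/r) * (h*(1 - h^2))

open Set Filter Topology

lemma phi_hasDerivAt (m : ℝ) (hm : 0 < m) (r : ℝ) :
    HasDerivAt (phi m) (Real.exp (r/(2*m) - 1) * (r/(2*m))) r := by
  have h1 : HasDerivAt (fun r : ℝ => r/(2*m) - 1) (1/(2*m)) r := by
    simpa using ((hasDerivAt_id r).div_const (2*m)).sub_const 1
  have h2 := h1.exp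
  have h3 : HasDerivAt (fun r : ℝ => r - 2*m) 1 r := (hasDerivAt_id r).sub_const _
  have := h2.mul h3
  refine this.congr_deriv ?_
  have hm' : (2*m) ≠ 0 := by positivity
  field_simp
  ring

lemma phi_strictMonoOn (m : ℝ) (hm : 0 < m) : StrictMonoOn (phi m) (Set.Ici 0) := by
  apply strictMonoOn_of_deriv_pos (convex_Ici 0)
  · exact fun x _ => (phi_hasDerivAt m hm x).continuousAt.continuousWithinAt
  · intro x hx
    rw [interior_Ici] at hx
    rw [(phi_hasDerivAt m hm x).deriv]
    have hx' : (0:ℝ) < x := hx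
    exact mul_pos (Real.exp_pos _) (by positivity)


set_option maxHeartbeats 1000000 in
/-- Near the blowup point `u₀ = c(s₀-1)/2`, the derivative of the blowup
solution satisfies `f'(u) ≥ -K/√(u₀ - u)` for `u ∈ [u₀ - ε, u₀)`. -/
theorem blowup_rate (m c : ℝ) (hm : 0 < m) (hc : c ∈ Set.Ioo 0 (cCrit m))
    (Rc : ℝ → ℝ)
    (hRc : ∀ s, 0 < Rc s ∧ phi m (Rc s) = c^2/4 * (s^2 - 1))
    (s₀ : ℝ) (hs₀ : s₀ ∈ Set.Ioo (0:ℝ) 1)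
    (h : ℝ → ℝ)
    (hrange : ∀ s ∈ Set.Icc (0:ℝ) s₀, h s ∈ Set.Icc (-1:ℝ) 1)
    (hsol : ∀ s ∈ Set.Icc (0:ℝ) s₀,
      HasDerivWithinAt h (Fc m c s (Rc s) (h s)) (Set.Icc (0:ℝ) s₀) s)
    (hinit : h 0 = 0)
    (hlt : ∀ s ∈ Set.Ico (0:ℝ) s₀, |h s| < 1)
    (hend : h s₀ = -1)
    (f f' : ℝ → ℝ)
    (hf'def : ∀ u, f' u = h ((2/c)*u + 1) / Real.sqrt (1 - (h ((2/c)*u + 1))^2))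
    (hf : ∀ u ∈ Set.Ico (-c/2) (c*(s₀-1)/2),
      HasDerivWithinAt f (f' u) (Set.Ico (-c/2) (c*(s₀-1)/2)) u)
    (hf0 : f (-c/2) = 0) :
    ∃ K > 0, ∃ ε > 0, ∀ u ∈ Set.Ico (c*(s₀-1)/2 - ε) (c*(s₀-1)/2),
      -K / Real.sqrt (c*(s₀-1)/2 - u) ≤ f' u := by
  obtain ⟨hc0, hccrit⟩ := hc
  obtain ⟨hs0pos, hs0lt1⟩ := hs₀
  have hmono := phi_strictMonoOn m hm
  set rstar := Rc s₀ with hrstar_def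
  have hrstar_pos : 0 < rstar := (hRc s₀).1
  have hphis : phi m rstar = c^2/4 * (s₀^2 - 1) := (hRc s₀).2
  have hpstar_pos : 0 < phiR m rstar := by
    unfold phiR
    exact mul_pos (by positivity) (Real.exp_pos _)
  have hs₀mem : s₀ ∈ Icc (0:ℝ) s₀ := ⟨hs0pos.le, le_refl _⟩
  -- upper bound on Rc on the interval
  have hRle : ∀ s ∈ Icc (0:ℝ) s₀, Rc s ≤ rstar := by
    intro s hs
    by_contra hgt
    push_neg at hgt
    have hlt' := hmono (le_of_lt hrstar_pos) (le_of_lt (hRc s).1) hgt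
    rw [hphis, (hRc s).2] at hlt'
    have hs2 : s^2 ≤ s₀^2 := by nlinarith [hs.1, hs.2]
    nlinarith [pow_pos hc0 2]
  -- Rc tends to rstar
  have hTR : Tendsto Rc (𝓝[Icc (0:ℝ) s₀] s₀) (𝓝 rstar) := by
    rw [tendsto_order]
    constructor
    · intro a ha
      rcases le_or_gt a 0 with h0 | h0
      · exact Eventually.of_forall fun s => lt_of_le_of_lt h0 (hRc s).1
      · have hlt' : phi m a < phi m rstar := hmono h0.le hrstar_pos.le ha
        rw [hphis] at hlt'
        have hψ : Tendsto (fun s : ℝ => c^2/4 * (s^2 - 1)) (𝓝[Icc (0:ℝ) s₀] s₀)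
            (𝓝 (c^2/4 * (s₀^2 - 1))) := by
          apply Tendsto.mono_left _ nhdsWithin_le_nhds
          exact (Continuous.tendsto (by continuity) s₀)
        filter_upwards [hψ.eventually (eventually_gt_nhds hlt')] with s hs2
        by_contra hle
        push_neg at hle
        have : phi m (Rc s) ≤ phi m a :=
          hmono.monotoneOn (le_of_lt (hRc s).1) h0.le hle
        rw [(hRc s).2] at this
        linarith
    · intro b hb
      filter_upwards [eventually_mem_nhdsWithin] with s hs
      exact lt_of_le_of_lt (hRle s hs) hb
  -- h tends to -1
  have hTh : Tendsto h (𝓝[Icc (0:ℝ) s₀] s₀) (𝓝 (-1)) := by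
    have := (hsol s₀ hs₀mem).continuousWithinAt
    rwa [ContinuousWithinAt, hend] at this
  -- limit of Fc along the solution
  have hTs : Tendsto (fun s : ℝ => s) (𝓝[Icc (0:ℝ) s₀] s₀) (𝓝 s₀) :=
    tendsto_id.mono_right nhdsWithin_le_nhds
  have hTphiR : Tendsto (fun s => phiR m (Rc s)) (𝓝[Icc (0:ℝ) s₀] s₀) (𝓝 (phiR m rstar)) := by
    have hcont : Continuous (phiR m) := by
      unfold phiR
      exact (continuous_id.div_const _).mul
        (Real.continuous_exp.comp ((continuous_id.div_const _).sub continuous_const))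
    exact (hcont.tendsto rstar).comp hTR
  have hTh2 : Tendsto (fun s => (h s)^2) (𝓝[Icc (0:ℝ) s₀] s₀) (𝓝 ((-1:ℝ)^2)) := hTh.pow 2
  have hTF : Tendsto (fun s => Fc m c s (Rc s) (h s)) (𝓝[Icc (0:ℝ) s₀] s₀)
      (𝓝 (Fc m c s₀ rstar (-1))) := by
    unfold Fc
    have h2m : (2:ℝ)*m*rstar ≠ 0 := by positivity
    have h8m : (8:ℝ)*m*rstar ≠ 0 := by positivity
    refine Tendsto.sub (Tendsto.sub ?_ ?_) ?_
    · refine Tendsto.mul (Tendsto.mul tendsto_const_nhds ?_) ?_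
      · refine (Real.continuous_sqrt.tendsto _).comp ?_
        refine Tendsto.add ?_ (hTh2.div_const 4)
        exact (tendsto_const_nhds.mul (tendsto_const_nhds.sub hTh2)).div hTphiR hpstar_pos.ne'
      · refine Tendsto.sub ?_ ?_
        · exact Tendsto.mul ((tendsto_const_nhds.sub hTh2).div hTphiR hpstar_pos.ne')
            (tendsto_const_nhds.sub (tendsto_const_nhds.div hTR hrstar_pos.ne'))
        · exact hTh2.div (tendsto_const_nhds.mul hTR) h2m
    · exact Tendsto.mul ((tendsto_const_nhds.mul hTs).div (tendsto_const_nhds.mul hTR) h8m)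
        (hTh.pow 3)
    · refine Tendsto.mul (Tendsto.mul ?_ ?_) ?_
      · refine ((tendsto_const_nhds.mul hTs).div (tendsto_const_nhds.mul hTphiR) ?_)
        have : (0:ℝ) < 4 * phiR m rstar := by positivity
        exact this.ne'
      · exact tendsto_const_nhds.add (tendsto_const_nhds.div hTR hrstar_pos.ne')
      · exact hTh.mul (tendsto_const_nhds.sub hTh2)
  -- value of the limit
  have hLeq : Fc m c s₀ rstar (-1) = c^2*(s₀-1)/(8*m*rstar) := by
    unfold Fc
    have hq : 2*m*(1 - (-1:ℝ)^2) / phiR m rstar + (-1:ℝ)^2/4 = (1/2)^2 := by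
      norm_num
    rw [hq, Real.sqrt_sq (by norm_num)]
    have hmne : m ≠ 0 := hm.ne'
    have hrne : rstar ≠ 0 := hrstar_pos.ne'
    have hpne : phiR m rstar ≠ 0 := hpstar_pos.ne'
    field_simp
    ring
  set κ : ℝ := -(Fc m c s₀ rstar (-1))/2 with hκdef
  have hκpos : 0 < κ := by
    rw [hκdef, hLeq]
    have : c^2*(s₀-1)/(8*m*rstar) < 0 := by
      apply div_neg_of_neg_of_pos
      · nlinarith [pow_pos hc0 2]
      · positivity
    linarith
  -- eventual bounds near s₀
  have hLval : Fc m c s₀ rstar (-1) = -(2*κ) := by rw [hκdef]; ring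
  have hev1 : ∀ᶠ s in 𝓝[Icc (0:ℝ) s₀] s₀, Fc m c s (Rc s) (h s) < -κ :=
    hTF.eventually (p := fun y => y < -κ) (eventually_lt_nhds (by rw [hLval]; linarith))
  have hev2 : ∀ᶠ s in 𝓝[Icc (0:ℝ) s₀] s₀, h s < -(1/2) :=
    hTh.eventually (p := fun y => y < -(1/2)) (eventually_lt_nhds (by norm_num))
  have hev := hev1.and hev2
  rw [eventually_nhdsWithin_iff, Metric.eventually_nhds_iff] at hev
  obtain ⟨ε', hε'pos, hev⟩ := hev
  set s₂ : ℝ := max (s₀ - ε'/2) 0 with hs₂def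
  have hs₂nonneg : 0 ≤ s₂ := le_max_right _ _
  have hs₂lt : s₂ < s₀ := max_lt (by linarith) hs0pos
  have hs₂ge : s₀ - ε'/2 ≤ s₂ := le_max_left _ _
  have hprop : ∀ s, s₂ ≤ s → s ≤ s₀ →
      Fc m c s (Rc s) (h s) < -κ ∧ h s < -(1/2) := by
    intro s hs1 hs2
    apply hev
    · rw [Real.dist_eq, abs_lt]
      constructor <;> [linarith; linarith]
    · exact ⟨le_trans hs₂nonneg hs1, hs2⟩
  -- the quantity 1 - h s ^ 2 decays at most linearly
  have hhcont : ContinuousOn h (Icc (0:ℝ) s₀) := fun s hs => (hsol s hs).continuousWithinAt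
  have hsubset : Icc s₂ s₀ ⊆ Icc (0:ℝ) s₀ := Icc_subset_Icc hs₂nonneg le_rfl
  set g : ℝ → ℝ := fun s => 1 - (h s)^2 + κ*s with hgdef
  have hderivg : ∀ x ∈ Ioo s₂ s₀,
      HasDerivAt g (κ - 2 * h x * Fc m c x (Rc x) (h x)) x := by
    intro x hx
    have hxmem : Icc (0:ℝ) s₀ ∈ 𝓝 x :=
      Icc_mem_nhds (lt_of_le_of_lt hs₂nonneg hx.1) hx.2
    have hdx : HasDerivAt h (Fc m c x (Rc x) (h x)) x :=
      (hsol x ⟨le_of_lt (lt_of_le_of_lt hs₂nonneg hx.1), hx.2.le⟩).hasDerivAt hxmem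
    have := ((hasDerivAt_const x (1:ℝ)).sub (hdx.pow 2)).add ((hasDerivAt_id x).const_mul κ)
    refine this.congr_deriv ?_
    ring
  have hanti : AntitoneOn g (Icc s₂ s₀) := by
    apply antitoneOn_of_deriv_nonpos (convex_Icc _ _)
    · exact ((continuousOn_const.sub ((hhcont.mono hsubset).pow 2)).add
        (continuousOn_const.mul continuousOn_id))
    · intro x hx
      rw [interior_Icc] at hx
      exact (hderivg x hx).differentiableAt.differentiableWithinAt
    · intro x hx
      rw [interior_Icc] at hx
      rw [(hderivg x hx).deriv]
      obtain ⟨hF, hh⟩ := hprop x hx.1.le hx.2.le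
      nlinarith [mul_nonneg (by linarith : (0:ℝ) ≤ -2*h x - 1)
        (by linarith : (0:ℝ) ≤ -Fc m c x (Rc x) (h x))]
  have hlower : ∀ s, s₂ ≤ s → s ≤ s₀ → κ * (s₀ - s) ≤ 1 - (h s)^2 := by
    intro s hs1 hs2
    have := hanti ⟨hs1, hs2⟩ ⟨hs₂lt.le, le_rfl⟩ hs2
    have hgs₀ : g s₀ = κ * s₀ := by rw [hgdef]; simp [hend]
    rw [hgs₀] at this
    have : κ * s₀ ≤ 1 - (h s)^2 + κ * s := this
    linarith [this]
  -- final estimate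
  refine ⟨(Real.sqrt (2*κ/c))⁻¹, inv_pos.mpr (Real.sqrt_pos.mpr (by positivity)),
    c*(s₀ - s₂)/2, div_pos (mul_pos hc0 (by linarith)) two_pos, ?_⟩
  · intro u hu
    obtain ⟨hu1, hu2⟩ := hu
    have hcne : c ≠ 0 := hc0.ne'
    have h2c : (0:ℝ) < 2/c := by positivity
    set s : ℝ := 2/c*u + 1 with hsdef
    have hss₂ : s₂ ≤ s := by
      have heq : s - s₂ = (2/c) * (u - (c*(s₀-1)/2 - c*(s₀ - s₂)/2)) := by
        rw [hsdef]; field_simp; ring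
      have : 0 ≤ s - s₂ := by
        rw [heq]; exact mul_nonneg h2c.le (by linarith)
      linarith
    have hss₀ : s < s₀ := by
      have heq : s₀ - s = (2/c) * (c*(s₀-1)/2 - u) := by
        rw [hsdef]; field_simp; ring
      have : 0 < s₀ - s := by
        rw [heq]; exact mul_pos h2c (by linarith)
      linarith
    have hsmem : s ∈ Icc (0:ℝ) s₀ := ⟨le_trans hs₂nonneg hss₂, hss₀.le⟩
    have hupos : 0 < c*(s₀-1)/2 - u := by linarith
    have hlow : (2*κ/c) * (c*(s₀-1)/2 - u) ≤ 1 - (h s)^2 := by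
      have h1 := hlower s hss₂ hss₀.le
      have h2 : κ * (s₀ - s) = (2*κ/c) * (c*(s₀-1)/2 - u) := by
        rw [hsdef]
        field_simp
        ring
      linarith [h2 ▸ h1]
    have hlowpos : 0 < (2*κ/c) * (c*(s₀-1)/2 - u) := by positivity
    have hBpos : 0 < Real.sqrt (1 - (h s)^2) :=
      Real.sqrt_pos.mpr (lt_of_lt_of_le hlowpos hlow)
    have hApos : 0 < Real.sqrt ((2*κ/c) * (c*(s₀-1)/2 - u)) := Real.sqrt_pos.mpr hlowpos
    have hAB : Real.sqrt ((2*κ/c) * (c*(s₀-1)/2 - u)) ≤ Real.sqrt (1 - (h s)^2) :=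
      Real.sqrt_le_sqrt hlow
    have hsplit : Real.sqrt ((2*κ/c) * (c*(s₀-1)/2 - u))
        = Real.sqrt (2*κ/c) * Real.sqrt (c*(s₀-1)/2 - u) :=
      Real.sqrt_mul (by positivity) _
    have hstep0 : -(Real.sqrt (2*κ/c))⁻¹ / Real.sqrt (c*(s₀-1)/2 - u)
        = -(1 / Real.sqrt ((2*κ/c) * (c*(s₀-1)/2 - u))) := by
      rw [hsplit, neg_div, one_div, mul_inv, div_eq_mul_inv]
    have hstep1 : -(1 / Real.sqrt ((2*κ/c) * (c*(s₀-1)/2 - u)))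
        ≤ -(1 / Real.sqrt (1 - (h s)^2)) := by
      have := one_div_le_one_div_of_le hApos hAB
      linarith
    have hstep2 : -(1 / Real.sqrt (1 - (h s)^2)) ≤ h s / Real.sqrt (1 - (h s)^2) := by
      have := (div_le_div_iff_of_pos_right hBpos).mpr (hrange s hsmem).1
      rwa [neg_div] at this
    rw [hf'def u]
    calc -(Real.sqrt (2*κ/c))⁻¹ / Real.sqrt (c*(s₀-1)/2 - u)
        = -(1 / Real.sqrt ((2*κ/c) * (c*(s₀-1)/2 - u))) := hstep0
      _ ≤ -(1 / Real.sqrt (1 - (h s)^2)) := hstep1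
      _ ≤ h s / Real.sqrt (1 - (h s)^2) := hstep2
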